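/- arXiv:2210.05403 — 7 statements merged into one kernel-verified Lean document; each statement's English description precedes it below -/
import Mathlib

section
/- Call a non-root vertex u light if 2·s(u) ≤ s(parent u). Then for every vertex v, the number of natural numbers k such that parent^[k] v ≠ r and parent^[k] v is light is at most Nat.log 2 (Fintype.card V). (This is the key property of the heavy path decomposition of Sleator–Tarjan: on any root-to-leaf path, the number of different heavy paths encountered is O(log n).) -/
/-- Key property of the heavy path decomposition: calling a non-root vertex `u` *light*
when `2 * s u ≤ s (parent u)`, the number of light strict ancestors (including the vertex
itself) encountered on the way from any vertex `v` to the root is at most `log₂ |V|`. -/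
theorem stmt1 {V : Type*} [Fintype V] (r : V) (parent : V → V) (hr : parent r = r)
    (dep : V → ℕ) (hdep0 : dep r = 0) (hdep : ∀ v, v ≠ r → dep v = dep (parent v) + 1)
    (s : V → ℕ)
    (hs : ∀ v, s v = {u | Relation.ReflTransGen (fun a b => b = parent a) u v}.ncard)
    (v : V) :
    {k : ℕ | parent^[k] v ≠ r ∧ 2 * s (parent^[k] v) ≤ s (parent (parent^[k] v))}.ncard
      ≤ Nat.log 2 (Fintype.card V) := by
  classical
  set P : ℕ → Prop :=
    fun k => parent^[k] v ≠ r ∧ 2 * s (parent^[k] v) ≤ s (parent (parent^[k] v)) with hP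
  have hspos : ∀ u, 1 ≤ s u := by
    intro u
    rw [hs]
    have hu : u ∈ {x | Relation.ReflTransGen (fun a b => b = parent a) x u} :=
      Relation.ReflTransGen.refl
    exact (Set.ncard_pos (Set.toFinite _)).2 ⟨u, hu⟩
  have hmono : ∀ u, s u ≤ s (parent u) := by
    intro u
    rw [hs, hs]
    refine Set.ncard_le_ncard ?_ (Set.toFinite _)
    intro x hx
    exact hx.tail rfl
  have hcard : ∀ u, s u ≤ Fintype.card V := by
    intro u; rw [hs]
    calc _ ≤ (Set.univ : Set V).ncard :=
          Set.ncard_le_ncard (Set.subset_univ _) (Set.toFinite _)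
      _ = Fintype.card V := by rw [Set.ncard_univ, Nat.card_eq_fintype_card]
  have hdepk : ∀ k, parent^[k] v ≠ r → dep (parent^[k] v) + k ≤ dep v := by
    intro k
    induction k with
    | zero => intro _; simp
    | succ n ih =>
      intro h
      rw [Function.iterate_succ_apply'] at h ⊢
      have hn : parent^[n] v ≠ r := by
        intro he; rw [he, hr] at h; exact h rfl
      have h1 := ih hn
      have h2 := hdep _ hn
      omega
  have hdep_pos : ∀ u, u ≠ r → 1 ≤ dep u := by
    intro u hu
    rw [hdep u hu]; omega
  have hsub : {k : ℕ | P k} ⊆ ↑(Finset.filter (fun k => P k) (Finset.range (dep v))) := by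
    intro k hk
    simp only [Finset.coe_filter, Finset.mem_range, Set.mem_setOf_eq]
    refine ⟨?_, hk⟩
    have h1 := hdepk k hk.1
    have h2 := hdep_pos _ hk.1
    omega
  have key : ∀ n, 2 ^ (Finset.filter (fun k => P k) (Finset.range n)).card
      ≤ s (parent^[n] v) := by
    intro n
    induction n with
    | zero => simpa using hspos v
    | succ n ih =>
      rw [Finset.range_add_one, Finset.filter_insert]
      by_cases h : P n
      · rw [if_pos h, Finset.card_insert_of_notMem (by simp)]
        rw [pow_succ, Function.iterate_succ_apply']
        have h2 := h.2
        nlinarith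
      · rw [if_neg h, Function.iterate_succ_apply']
        exact le_trans ih (hmono _)
  have hfinal : 2 ^ (Finset.filter (fun k => P k) (Finset.range (dep v))).card
      ≤ Fintype.card V := le_trans (key (dep v)) (hcard _)
  have hncard : {k : ℕ | P k}.ncard
      ≤ (Finset.filter (fun k => P k) (Finset.range (dep v))).card := by
    rw [← Set.ncard_coe_finset]
    exact Set.ncard_le_ncard hsub (Set.toFinite _)
  have hpos : 0 < Fintype.card V := Fintype.card_pos_iff.2 ⟨r⟩
  have hlog : (Finset.filter (fun k => P k) (Finset.range (dep v))).card
      ≤ Nat.log 2 (Fintype.card V) := by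
    rw [Nat.le_log_iff_pow_le (by norm_num) (by omega)]
    exact hfinal
  exact le_trans hncard hlog
end

section
/- Let I₁ ≤ I₂ be reals. For every i ∈ P, the point i satisfies I₁ ≤ x i ≤ I₂ and has the maximum weight among the points of P of color c i with position in [I₁, I₂], if and only if (I₁ : EReal) > L i, I₁ ≤ x i, x i ≤ I₂, and (I₂ : EReal) < R i. Consequently, the answer to the sum-max query on [I₁, I₂] equals the sum of w i over exactly those i ∈ P whose associated planar rectangle (L i, x i] × [x i, R i) contains the point (I₁, I₂); this reduces the sum-max problem to weighted rectangle stabbing. -/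
open Classical in
/-- Reduction of sum-max queries to weighted rectangle stabbing: a point `i` is the
maximum-weight point of its color inside `[I₁, I₂]` iff the query point `(I₁, I₂)` stabs
the rectangle `(L i, x i] × [x i, R i)`; consequently the answer to the sum-max query
equals the total weight of the stabbed rectangles. -/
theorem stmt2 {ι γ : Type*} [DecidableEq γ] (P : Finset ι)
    (x : ι → ℝ) (c : ι → γ) (w : ι → ℝ)
    (hxdist : ∀ i ∈ P, ∀ j ∈ P, c i = c j → i ≠ j → x i ≠ x j)
    (hwdist : ∀ i ∈ P, ∀ j ∈ P, c i = c j → i ≠ j → w i ≠ w j)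
    (L R : ι → EReal)
    (hL : ∀ i ∈ P, L i =
      sSup {t : EReal | ∃ j ∈ P, c j = c i ∧ w j > w i ∧ x j < x i ∧ t = (x j : EReal)})
    (hR : ∀ i ∈ P, R i =
      sInf {t : EReal | ∃ j ∈ P, c j = c i ∧ w j > w i ∧ x j > x i ∧ t = (x j : EReal)})
    (I₁ I₂ : ℝ) (hI : I₁ ≤ I₂) :
    (∀ i ∈ P,
      ((I₁ ≤ x i ∧ x i ≤ I₂ ∧
          ∀ j ∈ P, c j = c i → I₁ ≤ x j → x j ≤ I₂ → w j ≤ w i) ↔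
        (L i < (I₁ : EReal) ∧ I₁ ≤ x i ∧ x i ≤ I₂ ∧ (I₂ : EReal) < R i)))
    ∧
    (∑ γ₀ ∈ (P.filter (fun i => I₁ ≤ x i ∧ x i ≤ I₂)).image c,
        (P.filter (fun i => c i = γ₀ ∧ I₁ ≤ x i ∧ x i ≤ I₂)).sup (fun i => (w i : EReal)))
      = ∑ i ∈ P.filter
            (fun i => L i < (I₁ : EReal) ∧ I₁ ≤ x i ∧ x i ≤ I₂ ∧ (I₂ : EReal) < R i),
          (w i : EReal) := by

  have key : ∀ i ∈ P,
      ((I₁ ≤ x i ∧ x i ≤ I₂ ∧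
          ∀ j ∈ P, c j = c i → I₁ ≤ x j → x j ≤ I₂ → w j ≤ w i) ↔
        (L i < (I₁ : EReal) ∧ I₁ ≤ x i ∧ x i ≤ I₂ ∧ (I₂ : EReal) < R i)) := by
    intro i hi
    constructor
    · rintro ⟨h1, h2, hmax⟩
      refine ⟨?_, h1, h2, ?_⟩
      · rw [hL i hi]
        set S := {t : EReal | ∃ j ∈ P, c j = c i ∧ w j > w i ∧ x j < x i ∧ t = (x j : EReal)}
          with hSdef
        have hfin : S.Finite := by
          apply (P.finite_toSet.image (fun j => (x j : EReal))).subset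
          rintro t ⟨j, hj, _, _, _, rfl⟩
          exact ⟨j, hj, rfl⟩
        rcases S.eq_empty_or_nonempty with hS | hS
        · rw [hS, sSup_empty]
          exact bot_lt_iff_ne_bot.mpr (by simp)
        · have hmem : sSup S ∈ S := hS.csSup_mem hfin
          obtain ⟨j, hj, hcj, hwj, hxj, hEq⟩ := hmem
          have hxjI : x j < I₁ := by
            by_contra hcon
            push_neg at hcon
            exact absurd (hmax j hj hcj hcon (hxj.le.trans h2)) (not_le.mpr hwj)
          rw [hEq]
          exact_mod_cast hxjI
      · rw [hR i hi]
        set S := {t : EReal | ∃ j ∈ P, c j = c i ∧ w j > w i ∧ x j > x i ∧ t = (x j : EReal)}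
          with hSdef
        have hfin : S.Finite := by
          apply (P.finite_toSet.image (fun j => (x j : EReal))).subset
          rintro t ⟨j, hj, _, _, _, rfl⟩
          exact ⟨j, hj, rfl⟩
        rcases S.eq_empty_or_nonempty with hS | hS
        · rw [hS, sInf_empty]
          exact lt_top_iff_ne_top.mpr (by simp)
        · have hmem : sInf S ∈ S := hS.csInf_mem hfin
          obtain ⟨j, hj, hcj, hwj, hxj, hEq⟩ := hmem
          have hxjI : I₂ < x j := by
            by_contra hcon
            push_neg at hcon
            exact absurd (hmax j hj hcj (h1.trans hxj.le) hcon) (not_le.mpr hwj)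
          rw [hEq]
          exact_mod_cast hxjI
    · rintro ⟨hLi, h1, h2, hRi⟩
      refine ⟨h1, h2, ?_⟩
      intro j hj hcj hj1 hj2
      by_contra hcon
      push_neg at hcon
      have hji : j ≠ i := fun h => by rw [h] at hcon; exact lt_irrefl _ hcon
      have hxji : x j ≠ x i := hxdist j hj i hi hcj hji
      rcases lt_or_gt_of_ne hxji with hlt | hgt
      · have hmem : (x j : EReal) ∈
            {t : EReal | ∃ k ∈ P, c k = c i ∧ w k > w i ∧ x k < x i ∧ t = (x k : EReal)} :=
          ⟨j, hj, hcj, hcon, hlt, rfl⟩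
        have : (x j : EReal) ≤ L i := by rw [hL i hi]; exact le_sSup hmem
        have : (x j : EReal) < (I₁ : EReal) := lt_of_le_of_lt this hLi
        exact absurd hj1 (not_le.mpr (by exact_mod_cast this))
      · have hmem : (x j : EReal) ∈
            {t : EReal | ∃ k ∈ P, c k = c i ∧ w k > w i ∧ x k > x i ∧ t = (x k : EReal)} :=
          ⟨j, hj, hcj, hcon, hgt, rfl⟩
        have : R i ≤ (x j : EReal) := by rw [hR i hi]; exact sInf_le hmem
        have : (I₂ : EReal) < (x j : EReal) := lt_of_lt_of_le hRi this
        exact absurd hj2 (not_le.mpr (by exact_mod_cast this))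
  refine ⟨key, ?_⟩
  refine (Finset.sum_bij (fun i (_ : i ∈ P.filter
      (fun i => L i < (I₁ : EReal) ∧ I₁ ≤ x i ∧ x i ≤ I₂ ∧ (I₂ : EReal) < R i)) => c i)
      ?_ ?_ ?_ ?_).symm
  · intro a ha
    rw [Finset.mem_filter] at ha
    obtain ⟨haP, hstab⟩ := ha
    obtain ⟨h1, h2, _⟩ := (key a haP).mpr hstab
    exact Finset.mem_image.mpr ⟨a, Finset.mem_filter.mpr ⟨haP, h1, h2⟩, rfl⟩
  · intro a₁ ha₁ a₂ ha₂ hcc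
    rw [Finset.mem_filter] at ha₁ ha₂
    obtain ⟨h11, h12, hm1⟩ := (key a₁ ha₁.1).mpr ha₁.2
    obtain ⟨h21, h22, hm2⟩ := (key a₂ ha₂.1).mpr ha₂.2
    by_contra hne
    apply hwdist a₁ ha₁.1 a₂ ha₂.1 hcc hne
    exact le_antisymm (hm2 a₁ ha₁.1 hcc h11 h12) (hm1 a₂ ha₂.1 hcc.symm h21 h22)
  · intro γ₀ hγ₀
    obtain ⟨i0, hi0, hci0⟩ := Finset.mem_image.mp hγ₀
    rw [Finset.mem_filter] at hi0
    have hTne : (P.filter (fun j => c j = γ₀ ∧ I₁ ≤ x j ∧ x j ≤ I₂)).Nonempty :=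
      ⟨i0, Finset.mem_filter.mpr ⟨hi0.1, hci0, hi0.2⟩⟩
    obtain ⟨b, hb, hbmax⟩ := Finset.exists_max_image _ w hTne
    rw [Finset.mem_filter] at hb
    obtain ⟨hbP, hbc, hb1, hb2⟩ := hb
    have hmax : ∀ j ∈ P, c j = c b → I₁ ≤ x j → x j ≤ I₂ → w j ≤ w b := by
      intro j hj hcj hj1 hj2
      exact hbmax j (Finset.mem_filter.mpr ⟨hj, hcj.trans hbc, hj1, hj2⟩)
    have hbF := (key b hbP).mp ⟨hb1, hb2, hmax⟩
    exact ⟨b, Finset.mem_filter.mpr ⟨hbP, hbF⟩, hbc⟩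
  · intro a ha
    rw [Finset.mem_filter] at ha
    obtain ⟨haP, hstab⟩ := ha
    obtain ⟨h1, h2, hmax⟩ := (key a haP).mpr hstab
    show (w a : EReal) = (P.filter (fun i => c i = c a ∧ I₁ ≤ x i ∧ x i ≤ I₂)).sup
      (fun i => (w i : EReal))
    have haT : a ∈ P.filter (fun i => c i = c a ∧ I₁ ≤ x i ∧ x i ≤ I₂) :=
      Finset.mem_filter.mpr ⟨haP, rfl, h1, h2⟩
    refine le_antisymm (Finset.le_sup (f := fun i => (w i : EReal)) haT) (Finset.sup_le ?_)
    intro j hj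
    rw [Finset.mem_filter] at hj
    exact_mod_cast hmax j hj.1 hj.2.1 hj.2.2.1 hj.2.2.2
end

section
/- Let S : Finset (ℕ × ℕ) be nonempty with w ≥ 1 for every (i, w) ∈ S. Then (S.biUnion Anc).card = (S.sup Prod.fst + 1) + ∑_{i ∈ S.image Prod.fst} ((S.filter (fun p => p.1 = i)).sup Prod.snd). That is, on a generalized caterpillar the number of distinct ancestors of the colors of the query points equals a range-maximum over the central path plus, for each leg, the maximum weight of a query point assigned to that leg; hence an unweighted HCC query on the caterpillar computes the answer to the sum-max instance. -/
/-- The ancestor set of the leg vertex `(i, w)` of a generalized caterpillar: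
the central-path vertices `0, …, i` together with the leg vertices `(i, 1), …, (i, w)`. -/
def Anc (p : ℕ × ℕ) : Finset (ℕ ⊕ ℕ × ℕ) :=
  ((Finset.Iic p.1).image Sum.inl) ∪ ((Finset.Icc 1 p.2).image (fun v => Sum.inr (p.1, v)))

/-- On a generalized caterpillar, the number of distinct ancestors of the colors of the
query points equals a range maximum over the central path plus, for each leg, the maximum
weight of a query point assigned to that leg; hence an unweighted HCC query on the
caterpillar computes the answer to the sum-max instance. -/
theorem stmt7 (S : Finset (ℕ × ℕ)) (hS : S.Nonempty) (hw : ∀ p ∈ S, 1 ≤ p.2) :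
    (S.biUnion Anc).card =
      (S.sup Prod.fst + 1) +
        ∑ i ∈ S.image Prod.fst, (S.filter (fun p => p.1 = i)).sup Prod.snd := by
  classical
  have hA : S.biUnion Anc =
      ((Finset.Iic (S.sup Prod.fst)).image Sum.inl) ∪
        (S.image Prod.fst).biUnion
          (fun i => (Finset.Icc 1 ((S.filter (fun p => p.1 = i)).sup Prod.snd)).image
            (fun v => Sum.inr (i, v))) := by
    ext x
    simp only [Finset.mem_biUnion, Anc, Finset.mem_union, Finset.mem_image,
      Finset.mem_Iic, Finset.mem_Icc]
    constructor
    · rintro ⟨p, hp, h⟩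
      rcases h with ⟨j, hj, rfl⟩ | ⟨v, hv, rfl⟩
      · exact Or.inl ⟨j, le_trans hj (Finset.le_sup hp), rfl⟩
      · refine Or.inr ⟨p.1, ⟨p, hp, rfl⟩, v, ⟨hv.1, ?_⟩, rfl⟩
        exact le_trans hv.2 (Finset.le_sup (Finset.mem_filter.2 ⟨hp, rfl⟩))
    · rintro (⟨j, hj, rfl⟩ | ⟨i, ⟨p, hp, rfl⟩, v, ⟨hv1, hv2⟩, rfl⟩)
      · obtain ⟨q, hq, hq2⟩ := Finset.exists_mem_eq_sup S hS Prod.fst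
        exact ⟨q, hq, Or.inl ⟨j, by omega, rfl⟩⟩
      · have hne : (S.filter (fun r => r.1 = p.1)).Nonempty :=
          ⟨p, Finset.mem_filter.2 ⟨hp, rfl⟩⟩
        obtain ⟨q, hq, hq2⟩ := Finset.exists_mem_eq_sup _ hne Prod.snd
        have hq' := Finset.mem_filter.1 hq
        exact ⟨q, hq'.1, Or.inr ⟨v, ⟨hv1, by omega⟩, by rw [hq'.2]⟩⟩
  rw [hA, Finset.card_union_of_disjoint, Finset.card_image_of_injective _ Sum.inl_injective,
    Nat.card_Iic, Finset.card_biUnion]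
  · congr 1
    apply Finset.sum_congr rfl
    intro i hi
    rw [Finset.card_image_of_injective, Nat.card_Icc]
    · omega
    · intro a b h
      simpa using h
  · intro i hi j hj hij
    simp only [Finset.disjoint_left, Finset.mem_image]
    rintro x ⟨v, hv, rfl⟩ ⟨v', hv', h⟩
    injection h with h'
    exact hij (congrArg Prod.fst h').symm
  · simp only [Finset.disjoint_left, Finset.mem_image, Finset.mem_biUnion]
    rintro x ⟨j, hj, rfl⟩ ⟨i, hi, v, hv, h⟩
    exact absurd h (by simp)
end

section
/- Let η, d : ℕ, a : Fin η → Fin d → Bool, and b : Fin d → Bool. In the sum type Fin η ⊕ Fin d ⊕ Unit, let Anc be the finset consisting of: the vertex Sum.inr (Sum.inr ()), all vertices Sum.inr (Sum.inl k) with b k = true, and all vertices Sum.inl j such that ∃ k, a j k = true ∧ b k = true. Then Anc.card = (Finset.univ.filter (fun k => b k = true)).card + 1 + η if and only if for every j : Fin η there exists k with a j k = true and b k = true (i.e., no vector a j is orthogonal to b). -/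
/-- Orthogonal Vectors reduction: in the three-layer DAG, the number of distinct
ancestors of the bottom vertex equals `|b|₁ + 1 + η` iff no vector `a j` is orthogonal
to `b`. -/
theorem stmt8 (η d : ℕ) (a : Fin η → Fin d → Bool) (b : Fin d → Bool)
    (Anc : Finset (Fin η ⊕ Fin d ⊕ Unit))
    (hAnc : Anc =
      {Sum.inr (Sum.inr ())} ∪
        (Finset.univ.filter (fun k => b k = true)).image (fun k => Sum.inr (Sum.inl k)) ∪
        (Finset.univ.filter (fun j => ∃ k, a j k = true ∧ b k = true)).image Sum.inl) :
    Anc.card = (Finset.univ.filter (fun k => b k = true)).card + 1 + η ↔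
      ∀ j : Fin η, ∃ k, a j k = true ∧ b k = true := by
  subst hAnc
  have hinj1 : Function.Injective (fun k : Fin d => (Sum.inr (Sum.inl k) : Fin η ⊕ Fin d ⊕ Unit)) := by
    intro x y h; simpa using h
  have hinj2 : Function.Injective (Sum.inl : Fin η → Fin η ⊕ Fin d ⊕ Unit) := Sum.inl_injective
  rw [Finset.card_union_of_disjoint, Finset.card_union_of_disjoint, Finset.card_image_of_injective _ hinj1,
    Finset.card_image_of_injective _ hinj2, Finset.card_singleton]
  · constructor
    · intro h j
      have hle : (Finset.univ.filter (fun j => ∃ k, a j k = true ∧ b k = true)).card = η := by omega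
      have := Finset.eq_univ_of_card _ (by rw [hle, Fintype.card_fin])
      have hj : j ∈ Finset.univ.filter (fun j => ∃ k, a j k = true ∧ b k = true) := by
        rw [this]; exact Finset.mem_univ j
      simpa using hj
    · intro h
      have : Finset.univ.filter (fun j => ∃ k, a j k = true ∧ b k = true) = Finset.univ := by
        apply Finset.eq_univ_of_forall; intro j; simpa using h j
      rw [this]; simp [Finset.card_univ]; omega
  · simp [Finset.disjoint_left]
  · simp [Finset.disjoint_left]
end

section
/- Let P : Finset ι be partitioned into blocks B t (t ranging over a finite index set), each block having all its positions in an interval of m consecutive integers. Let K ⊆ P be a subset such that for every block B t and every color γ₀ occurring among the points of B t, K contains a point of B t of color γ₀ of minimum position and a point of B t of color γ₀ of maximum position. Then for all integers a, b with b − a ≥ m − 1: (K.filter (fun p => a ≤ pos p ∧ pos p ≤ b)).image c = (P.filter (fun p => a ≤ pos p ∧ pos p ≤ b)).image c. In words: the compressed point set K determines exactly the same set of colors as P inside every sufficiently long query interval. -/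
open Classical in
/-- Compression step: if the compressed set `K` keeps, in every block and for every color
occurring in that block, a point of minimum position and a point of maximum position of
that color, then `K` determines exactly the same set of colors as `P` inside every query
interval at least as long as the blocks. -/
theorem stmt10 {ι γ τ : Type*} [DecidableEq γ] [Fintype τ]
    (pos : ι → ℤ) (c : ι → γ) (m : ℤ)
    (P : Finset ι) (B : τ → Finset ι)
    (hcover : ∀ p ∈ P, ∃ t, p ∈ B t)
    (hsub : ∀ t, B t ⊆ P)
    (hdisj : ∀ t t', t ≠ t' → Disjoint (B t) (B t'))
    (hblock : ∀ t, ∃ β : ℤ, ∀ p ∈ B t, β ≤ pos p ∧ pos p ≤ β + m - 1)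
    (K : Finset ι) (hK : K ⊆ P)
    (hmin : ∀ t, ∀ γ₀ : γ, (∃ p ∈ B t, c p = γ₀) →
      ∃ p ∈ B t, p ∈ K ∧ c p = γ₀ ∧ ∀ p' ∈ B t, c p' = γ₀ → pos p ≤ pos p')
    (hmax : ∀ t, ∀ γ₀ : γ, (∃ p ∈ B t, c p = γ₀) →
      ∃ p ∈ B t, p ∈ K ∧ c p = γ₀ ∧ ∀ p' ∈ B t, c p' = γ₀ → pos p' ≤ pos p)
    (a b : ℤ) (hab : m - 1 ≤ b - a) :
    (K.filter (fun p => a ≤ pos p ∧ pos p ≤ b)).image c =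
      (P.filter (fun p => a ≤ pos p ∧ pos p ≤ b)).image c := by
  apply Finset.Subset.antisymm
  · exact Finset.image_subset_image (Finset.filter_subset_filter _ hK)
  · intro γ₀ hγ₀
    simp only [Finset.mem_image, Finset.mem_filter] at hγ₀ ⊢
    obtain ⟨p, ⟨hpP, hpa, hpb⟩, hpc⟩ := hγ₀
    obtain ⟨t, hpt⟩ := hcover p hpP
    obtain ⟨β, hβ⟩ := hblock t
    obtain ⟨q, hqt, hqK, hqc, hqmin⟩ := hmin t γ₀ ⟨p, hpt, hpc⟩
    obtain ⟨r, hrt, hrK, hrc, hrmax⟩ := hmax t γ₀ ⟨p, hpt, hpc⟩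
    by_cases h : a ≤ pos q
    · exact ⟨q, ⟨hqK, h, (hqmin p hpt hpc).trans hpb⟩, hqc⟩
    · refine ⟨r, ⟨hrK, hpa.trans (hrmax p hpt hpc), ?_⟩, hrc⟩
      have h1 := (hβ q hqt).1
      have h2 := (hβ r hrt).2
      omega
end

section
/- Let P be a finite index set of 3D points with integer coordinates x i, y i, z i ≥ 1 whose z-coordinates are pairwise distinct, and let (qx, qy, qz) ∈ ℤ³ with qx, qy, qz ≥ 0. Let D₁ be the number of distinct second coordinates among the planar points {(−x i, (z i : ℚ)) : i ∈ P} ∪ {((y i : ℚ), (z i : ℚ)) : i ∈ P} lying in the range [−qx, qy] × (−∞, qz + 1/2], and let D₂ be the number of distinct second coordinates among {(−x i, (z i : ℚ)) : i ∈ P} ∪ {((y i : ℚ), (z i : ℚ) + 1/2) : i ∈ P} lying in the same range. Then (D₂ : ℤ) − (D₁ : ℤ) equals the number of i ∈ P with x i ≤ qx, y i ≤ qy, and z i ≤ qz. Hence 3D dominance counting reduces to two 3-sided distinct coordinate counting queries. -/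
private lemma half_le (a b : ℤ) : (a:ℚ) ≤ (b:ℚ) + 1/2 ↔ a ≤ b := by
  constructor
  · intro h
    by_contra hc
    push_neg at hc
    have : (b:ℚ) + 1 ≤ a := by exact_mod_cast hc
    linarith
  · intro h
    have : (a:ℚ) ≤ b := by exact_mod_cast h
    linarith

private lemma half_ne (a b : ℤ) : (a:ℚ) ≠ (b:ℚ) + 1/2 := by
  intro h
  have h2 : ((2*a : ℤ):ℚ) = ((2*b+1 : ℤ):ℚ) := by push_cast; linarith
  have h3 : (2*a : ℤ) = 2*b+1 := by exact_mod_cast h2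
  omega

/-- 3D dominance counting reduces to two 3-sided distinct coordinate counting queries:
the difference of the numbers of distinct second coordinates in the two planar point
sets inside the 3-sided range `[-qx, qy] × (-∞, qz + 1/2]` equals the number of input
points dominated by `(qx, qy, qz)`. -/
theorem stmt11 {ι : Type*} [DecidableEq ι] (P : Finset ι) (x y z : ι → ℤ)
    (hx : ∀ i ∈ P, 1 ≤ x i) (hy : ∀ i ∈ P, 1 ≤ y i) (hz : ∀ i ∈ P, 1 ≤ z i)
    (hzdist : ∀ i ∈ P, ∀ j ∈ P, i ≠ j → z i ≠ z j)
    (qx qy qz : ℤ) (hqx : 0 ≤ qx) (hqy : 0 ≤ qy) (hqz : 0 ≤ qz)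
    (D₁ D₂ : ℕ)
    (hD₁ : D₁ =
      ((((P.image fun i => ((-x i : ℚ), (z i : ℚ))) ∪
          (P.image fun i => ((y i : ℚ), (z i : ℚ)))).filter
        (fun p => -(qx : ℚ) ≤ p.1 ∧ p.1 ≤ (qy : ℚ) ∧ p.2 ≤ (qz : ℚ) + 1 / 2)).image
          Prod.snd).card)
    (hD₂ : D₂ =
      ((((P.image fun i => ((-x i : ℚ), (z i : ℚ))) ∪
          (P.image fun i => ((y i : ℚ), (z i : ℚ) + 1 / 2))).filter
        (fun p => -(qx : ℚ) ≤ p.1 ∧ p.1 ≤ (qy : ℚ) ∧ p.2 ≤ (qz : ℚ) + 1 / 2)).image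
          Prod.snd).card) :
    (D₂ : ℤ) - (D₁ : ℤ) =
      ((P.filter fun i => x i ≤ qx ∧ y i ≤ qy ∧ z i ≤ qz).card : ℤ) := by
  classical
  set A := (P.filter fun i => x i ≤ qx ∧ z i ≤ qz).image (fun i => (z i : ℚ)) with hAdef
  set B := (P.filter fun i => y i ≤ qy ∧ z i ≤ qz).image (fun i => (z i : ℚ)) with hBdef
  set C := (P.filter fun i => y i ≤ qy ∧ z i ≤ qz).image (fun i => (z i : ℚ) + 1/2)
    with hCdef
  have hzinj : ∀ i ∈ P, ∀ j ∈ P, (z i : ℚ) = (z j : ℚ) → i = j := by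
    intro i hi j hj h
    by_contra hne
    exact hzdist i hi j hj hne (by exact_mod_cast h)
  -- D₁ = |A ∪ B|
  have hD1' : D₁ = (A ∪ B).card := by
    rw [hD₁]
    congr 1
    ext q
    simp only [hAdef, hBdef, Finset.filter_union, Finset.image_union, Finset.mem_union,
      Finset.mem_image, Finset.mem_filter]
    constructor
    · rintro (⟨p, ⟨⟨i, hi, rfl⟩, h1, h2, h3⟩, rfl⟩ | ⟨p, ⟨⟨i, hi, rfl⟩, h1, h2, h3⟩, rfl⟩)
      · left
        dsimp only at h1 h2 h3
        refine ⟨i, ⟨hi, ?_, (half_le _ _).1 h3⟩, rfl⟩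
        have : (x i : ℚ) ≤ (qx : ℚ) := by linarith
        exact_mod_cast this
      · right
        dsimp only at h1 h2 h3
        refine ⟨i, ⟨hi, ?_, (half_le _ _).1 h3⟩, rfl⟩
        exact_mod_cast h2
    · rintro (⟨i, ⟨hi, h1, h2⟩, rfl⟩ | ⟨i, ⟨hi, h1, h2⟩, rfl⟩)
      · refine Or.inl ⟨_, ⟨⟨i, hi, rfl⟩, ?_, ?_, ?_⟩, rfl⟩ <;> dsimp only
        · have : (x i : ℚ) ≤ (qx : ℚ) := by exact_mod_cast h1
          linarith
        · have h1' : (1:ℚ) ≤ (x i:ℚ) := by exact_mod_cast hx i hi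
          have hq : (0:ℚ) ≤ (qy:ℚ) := by exact_mod_cast hqy
          linarith
        · exact (half_le _ _).2 h2
      · refine Or.inr ⟨_, ⟨⟨i, hi, rfl⟩, ?_, ?_, ?_⟩, rfl⟩ <;> dsimp only
        · have h1' : (1:ℚ) ≤ (y i:ℚ) := by exact_mod_cast hy i hi
          have hq : (0:ℚ) ≤ (qx:ℚ) := by exact_mod_cast hqx
          linarith
        · exact_mod_cast h1
        · exact (half_le _ _).2 h2
  -- D₂ = |A ∪ C|
  have hD2' : D₂ = (A ∪ C).card := by
    rw [hD₂]
    congr 1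
    ext q
    simp only [hAdef, hCdef, Finset.filter_union, Finset.image_union, Finset.mem_union,
      Finset.mem_image, Finset.mem_filter]
    constructor
    · rintro (⟨p, ⟨⟨i, hi, rfl⟩, h1, h2, h3⟩, rfl⟩ | ⟨p, ⟨⟨i, hi, rfl⟩, h1, h2, h3⟩, rfl⟩)
      · left
        dsimp only at h1 h2 h3
        refine ⟨i, ⟨hi, ?_, (half_le _ _).1 h3⟩, rfl⟩
        have : (x i : ℚ) ≤ (qx : ℚ) := by linarith
        exact_mod_cast this
      · right
        dsimp only at h1 h2 h3
        refine ⟨i, ⟨hi, ?_, ?_⟩, rfl⟩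
        · exact_mod_cast h2
        · have h3' : (z i : ℚ) ≤ (qz : ℚ) := by linarith
          exact_mod_cast h3'
    · rintro (⟨i, ⟨hi, h1, h2⟩, rfl⟩ | ⟨i, ⟨hi, h1, h2⟩, rfl⟩)
      · refine Or.inl ⟨_, ⟨⟨i, hi, rfl⟩, ?_, ?_, ?_⟩, rfl⟩ <;> dsimp only
        · have : (x i : ℚ) ≤ (qx : ℚ) := by exact_mod_cast h1
          linarith
        · have h1' : (1:ℚ) ≤ (x i:ℚ) := by exact_mod_cast hx i hi
          have hq : (0:ℚ) ≤ (qy:ℚ) := by exact_mod_cast hqy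
          linarith
        · exact (half_le _ _).2 h2
      · refine Or.inr ⟨_, ⟨⟨i, hi, rfl⟩, ?_, ?_, ?_⟩, rfl⟩ <;> dsimp only
        · have h1' : (1:ℚ) ≤ (y i:ℚ) := by exact_mod_cast hy i hi
          have hq : (0:ℚ) ≤ (qx:ℚ) := by exact_mod_cast hqx
          linarith
        · exact_mod_cast h1
        · have h2' : (z i : ℚ) ≤ (qz : ℚ) := by exact_mod_cast h2
          linarith
  -- A and C disjoint
  have hdisj : Disjoint A C := by
    rw [Finset.disjoint_left]
    rintro q hqA hqC
    rw [hAdef, Finset.mem_image] at hqA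
    rw [hCdef, Finset.mem_image] at hqC
    obtain ⟨i, _, rfl⟩ := hqA
    obtain ⟨j, _, hj⟩ := hqC
    exact half_ne (z i) (z j) hj.symm
  have hBcard : B.card = (P.filter fun i => y i ≤ qy ∧ z i ≤ qz).card := by
    rw [hBdef]
    apply Finset.card_image_of_injOn
    intro i hi j hj h
    exact hzinj i (Finset.mem_filter.1 hi).1 j (Finset.mem_filter.1 hj).1 h
  have hCcard : C.card = (P.filter fun i => y i ≤ qy ∧ z i ≤ qz).card := by
    rw [hCdef]
    apply Finset.card_image_of_injOn
    intro i hi j hj h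
    simp only at h
    exact hzinj i (Finset.mem_filter.1 hi).1 j (Finset.mem_filter.1 hj).1 (by linarith)
  have hAB : A ∩ B = (P.filter fun i => x i ≤ qx ∧ y i ≤ qy ∧ z i ≤ qz).image
      (fun i => (z i : ℚ)) := by
    ext q
    simp only [hAdef, hBdef, Finset.mem_inter, Finset.mem_image, Finset.mem_filter]
    constructor
    · rintro ⟨⟨i, ⟨hi, hxi, hzi⟩, rfl⟩, ⟨j, ⟨hj, hyj, hzj⟩, hjq⟩⟩
      have hij : j = i := hzinj j hj i hi hjq
      exact ⟨i, ⟨hi, hxi, hij ▸ hyj, hzi⟩, rfl⟩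
    · rintro ⟨i, ⟨hi, h1, h2, h3⟩, rfl⟩
      exact ⟨⟨i, ⟨hi, h1, h3⟩, rfl⟩, ⟨i, ⟨hi, h2, h3⟩, rfl⟩⟩
  have hABcard : (A ∩ B).card = (P.filter fun i => x i ≤ qx ∧ y i ≤ qy ∧ z i ≤ qz).card := by
    rw [hAB]
    apply Finset.card_image_of_injOn
    intro i hi j hj h
    exact hzinj i (Finset.mem_filter.1 hi).1 j (Finset.mem_filter.1 hj).1 h
  have h1 : (A ∪ C).card = A.card + C.card := Finset.card_union_of_disjoint hdisj
  have h2 : (A ∪ B).card + (A ∩ B).card = A.card + B.card :=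
    Finset.card_union_add_card_inter A B
  rw [hD1', hD2']
  omega
end

section
/- Let f : C → U be injective and B : D → Finset U satisfy f c ∉ B d for all c : C and d : D, and define A c = insert (f c) (B (π c)) for a map π : C → D. Then for every S : Finset C, (S.biUnion A).card = S.card + (S.biUnion (fun c => B (π c))).card. In words: the number of distinct ancestors in the original tree T₁ of the colors occurring in a query exceeds the number of distinct ancestors in the collapsed tree T₂ by exactly the number of distinct colors in the query; hence a colored range counting answer equals the difference of two hierarchical color counting answers, and HCC is at least as hard as colored range counting. -/
/-- HCC is at least as hard as colored range counting: the number of distinct ancestors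
in the original tree `T₁` of the colors occurring in a query exceeds the number of
distinct ancestors in the collapsed tree `T₂` by exactly the number of distinct colors
in the query. -/
theorem stmt12 {C D U : Type*} [DecidableEq C] [DecidableEq U]
    (f : C → U) (hf : Function.Injective f)
    (B : D → Finset U) (hfB : ∀ (c : C) (d : D), f c ∉ B d) (π : C → D)
    (A : C → Finset U) (hA : ∀ c, A c = insert (f c) (B (π c)))
    (S : Finset C) :
    (S.biUnion A).card = S.card + (S.biUnion fun c => B (π c)).card := by
  have key : S.biUnion A = S.image f ∪ S.biUnion (fun c => B (π c)) := by
    ext u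
    simp only [Finset.mem_biUnion, Finset.mem_union, Finset.mem_image, hA,
      Finset.mem_insert]
    constructor
    · rintro ⟨c, hc, h | h⟩
      · exact Or.inl ⟨c, hc, h.symm⟩
      · exact Or.inr ⟨c, hc, h⟩
    · rintro (⟨c, hc, h⟩ | ⟨c, hc, h⟩)
      · exact ⟨c, hc, Or.inl h.symm⟩
      · exact ⟨c, hc, Or.inr h⟩
  rw [key, Finset.card_union_of_disjoint, Finset.card_image_of_injective _ hf]
  rw [Finset.disjoint_left]
  rintro u hu hu'
  simp only [Finset.mem_image] at hu
  simp only [Finset.mem_biUnion] at hu'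
  obtain ⟨c, _, rfl⟩ := hu
  obtain ⟨c', _, h⟩ := hu'
  exact hfB c (π c') h
end
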